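/- Let L be a symmetric n×n real matrix and D a real number, and let 𝒜 be the 2n×2n real block matrix with blocks (-D·Iₙ, Iₙ; -L, 0). Then a complex number λ is an eigenvalue of 𝒜 (viewed as a complex matrix) if and only if there exists a real eigenvalue μ̃ of L such that λ² + D·λ + μ̃ = 0, i.e. λ = (-D ± √(D² - 4μ̃))/2. -/

import Mathlib

open Matrix

/-- Spectrum membership for matrices over a field via determinant. -/
lemma aux_mem_spectrum_iff_det {m : Type*} [Fintype m] [DecidableEq m] {K : Type*} [Field K]
    (M : Matrix m m K) (x : K) :
    x ∈ spectrum K M ↔ (x • (1 : Matrix m m K) - M).det = 0 := by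
  rw [spectrum.mem_iff, Matrix.isUnit_iff_isUnit_det, isUnit_iff_ne_zero, not_not,
    Algebra.algebraMap_eq_smul_one]

/-- Real spectrum transfers along the complexification. -/
lemma aux_real_mem_iff {m : Type*} [Fintype m] [DecidableEq m] (L : Matrix m m ℝ) (μ : ℝ) :
    μ ∈ spectrum ℝ L ↔ (μ : ℂ) ∈ spectrum ℂ (L.map Complex.ofReal) := by
  rw [aux_mem_spectrum_iff_det, aux_mem_spectrum_iff_det]
  have h : (μ : ℂ) • (1 : Matrix m m ℂ) - L.map Complex.ofReal
      = Complex.ofRealHom.mapMatrix (μ • (1 : Matrix m m ℝ) - L) := by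
    ext i j
    simp [Matrix.map_apply, Matrix.one_apply, apply_ite]
  rw [h, ← RingHom.map_det]
  simp

/-- Spectrum of a complex Hermitian matrix is the range of its (real) eigenvalues. -/
lemma aux_herm_spectrum {m : Type*} [Fintype m] [DecidableEq m] {A : Matrix m m ℂ}
    (hA : A.IsHermitian) :
    spectrum ℂ A = Set.range (fun i => (hA.eigenvalues i : ℂ)) := by
  conv_lhs => rw [hA.spectral_theorem]
  rw [Unitary.conjStarAlgAut_apply, Unitary.spectrum_star_right_conjugate, spectrum_diagonal]
  rfl

theorem stmt_7 {n : ℕ} (L : Matrix (Fin n) (Fin n) ℝ) (hL : L.IsSymm) (D : ℝ) :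
    let 𝒜 : Matrix (Fin n ⊕ Fin n) (Fin n ⊕ Fin n) ℝ :=
      Matrix.fromBlocks ((-D) • 1) 1 (-L) 0
    ∀ lam : ℂ,
      lam ∈ spectrum ℂ (𝒜.map Complex.ofReal) ↔
        ∃ μ : ℝ, μ ∈ spectrum ℝ L ∧ lam ^ 2 + (D : ℂ) * lam + (μ : ℂ) = 0 := by
  intro 𝒜 lam
  set Lc : Matrix (Fin n) (Fin n) ℂ := L.map Complex.ofReal with hLc
  have hLcherm : Lc.IsHermitian := by
    ext i j
    simp only [hLc, Matrix.conjTranspose_apply, Matrix.map_apply, Complex.star_def,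
      Complex.conj_ofReal, Complex.ofReal_inj]
    exact hL.apply i j
  set q : ℂ := lam ^ 2 + (D : ℂ) * lam with hq
  have hmap : 𝒜.map Complex.ofReal
      = Matrix.fromBlocks ((-(D : ℂ)) • 1) 1 (-Lc) 0 := by
    show (Matrix.fromBlocks ((-D) • 1) 1 (-L) 0).map Complex.ofReal = _
    rw [Matrix.fromBlocks_map, Matrix.fromBlocks_inj]
    refine ⟨?_, ?_, ?_, ?_⟩
    · ext i j; by_cases h : i = j <;> simp [Matrix.map_apply, Matrix.one_apply, h]
    · ext i j; by_cases h : i = j <;> simp [Matrix.map_apply, Matrix.one_apply, h]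
    · ext i j; simp [Matrix.map_apply, hLc]
    · ext i j; simp [Matrix.map_apply]
  have hblock : lam • (1 : Matrix (Fin n ⊕ Fin n) (Fin n ⊕ Fin n) ℂ) - 𝒜.map Complex.ofReal
      = Matrix.fromBlocks ((lam + D) • 1) (-1) Lc (lam • 1) := by
    rw [hmap, ← Matrix.fromBlocks_one, Matrix.fromBlocks_smul, smul_zero, sub_eq_add_neg,
      Matrix.fromBlocks_neg, Matrix.fromBlocks_add, Matrix.fromBlocks_inj]
    refine ⟨?_, ?_, ?_, ?_⟩ <;> module
  have key : lam ∈ spectrum ℂ (𝒜.map Complex.ofReal) ↔ (-q) ∈ spectrum ℂ Lc := by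
    rw [aux_mem_spectrum_iff_det, aux_mem_spectrum_iff_det, hblock]
    have h1 : Matrix.fromBlocks ((lam + D) • (1 : Matrix (Fin n) (Fin n) ℂ))
        (-1 : Matrix (Fin n) (Fin n) ℂ) Lc (lam • (1 : Matrix (Fin n) (Fin n) ℂ)) *
        Matrix.fromBlocks (1 : Matrix (Fin n) (Fin n) ℂ) (0 : Matrix (Fin n) (Fin n) ℂ)
        ((lam + D) • (1 : Matrix (Fin n) (Fin n) ℂ)) (1 : Matrix (Fin n) (Fin n) ℂ)
        = Matrix.fromBlocks (0 : Matrix (Fin n) (Fin n) ℂ) (-1) (Lc + q • 1) (lam • 1) := by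
      rw [Matrix.fromBlocks_multiply, Matrix.fromBlocks_inj]
      refine ⟨?_, ?_, ?_, ?_⟩ <;> simp [Matrix.smul_mul, Matrix.mul_smul, smul_smul, hq] <;> module
    have h2 : Matrix.fromBlocks (0 : Matrix (Fin n) (Fin n) ℂ) (-1) (Lc + q • 1) (lam • 1) *
        Matrix.fromBlocks (0 : Matrix (Fin n) (Fin n) ℂ) (1 : Matrix (Fin n) (Fin n) ℂ)
        (1 : Matrix (Fin n) (Fin n) ℂ) (0 : Matrix (Fin n) (Fin n) ℂ)
        = Matrix.fromBlocks (-1 : Matrix (Fin n) (Fin n) ℂ) 0 (lam • 1) (Lc + q • 1) := by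
      rw [Matrix.fromBlocks_multiply]
      simp
    have hdetE : (Matrix.fromBlocks (1 : Matrix (Fin n) (Fin n) ℂ) (0 : Matrix (Fin n) (Fin n) ℂ)
        ((lam + D) • (1 : Matrix (Fin n) (Fin n) ℂ)) (1 : Matrix (Fin n) (Fin n) ℂ)).det = 1 := by
      rw [Matrix.det_fromBlocks_zero₁₂]; simp
    have hJ : (Matrix.fromBlocks (0 : Matrix (Fin n) (Fin n) ℂ) (1 : Matrix (Fin n) (Fin n) ℂ)
        (1 : Matrix (Fin n) (Fin n) ℂ) (0 : Matrix (Fin n) (Fin n) ℂ)).det ≠ 0 := by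
      have hsq : Matrix.fromBlocks (0 : Matrix (Fin n) (Fin n) ℂ) (1 : Matrix (Fin n) (Fin n) ℂ)
          (1 : Matrix (Fin n) (Fin n) ℂ) (0 : Matrix (Fin n) (Fin n) ℂ) *
          Matrix.fromBlocks (0 : Matrix (Fin n) (Fin n) ℂ) (1 : Matrix (Fin n) (Fin n) ℂ)
          (1 : Matrix (Fin n) (Fin n) ℂ) (0 : Matrix (Fin n) (Fin n) ℂ) = 1 := by
        rw [Matrix.fromBlocks_multiply]; simp [← Matrix.fromBlocks_one]
      intro h
      have := congrArg Matrix.det hsq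
      rw [Matrix.det_mul, h, mul_zero, Matrix.det_one] at this
      exact zero_ne_one this
    have h3 := h1 ▸ h2
    have hd := congrArg Matrix.det h3
    rw [Matrix.det_mul, Matrix.det_mul, hdetE, mul_one, Matrix.det_fromBlocks_zero₁₂] at hd
    have hneg : (-q) • (1 : Matrix (Fin n) (Fin n) ℂ) - Lc = -(Lc + q • 1) := by
      module
    have hdetneg : ((-1 : Matrix (Fin n) (Fin n) ℂ)).det ≠ 0 := by
      rw [show (-1 : Matrix (Fin n) (Fin n) ℂ) = -(1 : Matrix (Fin n) (Fin n) ℂ) from rfl,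
        Matrix.det_neg]
      simp [pow_ne_zero]
    rw [hneg, Matrix.det_neg]
    constructor
    · intro h0
      rw [h0, zero_mul] at hd
      rcases mul_eq_zero.mp hd.symm with h | h
      · exact absurd h hdetneg
      · rw [h, mul_zero]
    · intro h0
      rcases mul_eq_zero.mp h0 with h | h
      · exact absurd h (by simp [pow_ne_zero])
      · rw [h, mul_zero] at hd
        rcases mul_eq_zero.mp hd with h' | h'
        · exact h'
        · exact absurd h' hJ
  rw [key, aux_herm_spectrum hLcherm]
  constructor
  · rintro ⟨i, hi⟩
    refine ⟨hLcherm.eigenvalues i, ?_, ?_⟩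
    · rw [aux_real_mem_iff]
      rw [show L.map Complex.ofReal = Lc from rfl, aux_herm_spectrum hLcherm]
      exact ⟨i, rfl⟩
    · rw [hq] at hi
      linear_combination hi
  · rintro ⟨μ, hμ, hμeq⟩
    have hmem : (μ : ℂ) ∈ spectrum ℂ Lc := (aux_real_mem_iff L μ).mp hμ
    rw [aux_herm_spectrum hLcherm] at hmem
    rcases hmem with ⟨i, hi⟩
    refine ⟨i, ?_⟩
    rw [hi, hq]
    linear_combination hμeq
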